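/- arXiv:1808.00372 — 3 statements merged into one kernel-verified Lean document; each statement's English description precedes it below -/
import Mathlib

section
/- Let G be a simple connected bipartite graph with n nodes and m edges, and S_q(G) its q-subdivision graph. Then 0 is an eigenvalue of the normalized adjacency matrix of S_q(G) with multiplicity exactly mq - n + 2. -/
open Finset

variable {V : Type*}

/-- Normalized adjacency matrix `P = D^{-1/2} A D^{-1/2}`. -/
noncomputable def normAdj [Fintype V] (G : SimpleGraph V) [DecidableRel G.Adj] :
    Matrix V V ℝ :=
  Matrix.of fun i j =>
    if G.Adj i j then 1 / Real.sqrt ((G.degree i : ℝ) * (G.degree j : ℝ)) else 0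

lemma normAdj_isHermitian [Fintype V] (G : SimpleGraph V) [DecidableRel G.Adj] :
    (normAdj G).IsHermitian := by
  ext i j
  simp only [Matrix.conjTranspose_apply, normAdj, Matrix.of_apply, star_trivial]
  by_cases h : G.Adj i j
  · rw [if_pos h, if_pos ((G.adj_comm i j).mp h), mul_comm]
  · rw [if_neg h, if_neg (fun h' => h ((G.adj_comm j i).mp h'))]

/-- `μ` is an eigenvalue of `M`. -/
def IsEigenvalue {W : Type*} [Fintype W] (M : Matrix W W ℝ) (μ : ℝ) : Prop :=
  ∃ v : W → ℝ, v ≠ 0 ∧ M.mulVec v = μ • v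

/-- Multiplicity of `μ` as an eigenvalue of `M` (dimension of the eigenspace). -/
noncomputable def eigMult {W : Type*} [Fintype W] [DecidableEq W]
    (M : Matrix W W ℝ) (μ : ℝ) : ℕ :=
  Module.finrank ℝ (LinearMap.ker (Matrix.toLin' (M - μ • (1 : Matrix W W ℝ))))

/-- `r` is the effective-resistance function of `G`: `r i j = φ i - φ j` where
`L φ = e_i - e_j`. -/
def IsEffRes [Fintype V] [DecidableEq V] (G : SimpleGraph V) [DecidableRel G.Adj]
    (r : V → V → ℝ) : Prop :=
  ∀ i j : V, ∃ φ : V → ℝ,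
    (G.lapMatrix ℝ).mulVec φ =
      (fun k => (if k = i then (1 : ℝ) else 0) - (if k = j then (1 : ℝ) else 0)) ∧
    r i j = φ i - φ j

/-- `T` is the expected-hitting-time function of the simple random walk on `G`. -/
def IsHitting [Fintype V] (G : SimpleGraph V) [DecidableRel G.Adj] (T : V → V → ℝ) : Prop :=
  (∀ j, T j j = 0) ∧
  ∀ i j : V, i ≠ j → T i j = 1 + (∑ k ∈ G.neighborFinset i, T k j) / (G.degree i : ℝ)

/-- Kemeny constant `∑_{λ eigenvalue ≠ 1} 1/(1-λ)` of the random walk on `G`. -/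
noncomputable def kemeny [Fintype V] [DecidableEq V] (G : SimpleGraph V) [DecidableRel G.Adj]
    (hP : (normAdj G).IsHermitian) : ℝ :=
  ∑ i, if hP.eigenvalues i = 1 then 0 else 1 / (1 - hP.eigenvalues i)

/-- Kirchhoff index. -/
noncomputable def kirchhoff [Fintype V] (r : V → V → ℝ) : ℝ :=
  (∑ i, ∑ j, r i j) / 2

/-- Additive degree-Kirchhoff index. -/
noncomputable def addKirchhoff [Fintype V] (G : SimpleGraph V) [DecidableRel G.Adj]
    (r : V → V → ℝ) : ℝ :=
  (∑ i, ∑ j, ((G.degree i : ℝ) + (G.degree j : ℝ)) * r i j) / 2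

/-- Multiplicative degree-Kirchhoff index. -/
noncomputable def mulKirchhoff [Fintype V] (G : SimpleGraph V) [DecidableRel G.Adj]
    (r : V → V → ℝ) : ℝ :=
  (∑ i, ∑ j, (G.degree i : ℝ) * (G.degree j : ℝ) * r i j) / 2

/-- The adjacency relation of the q-subdivision graph. -/
def qSubAdj (G : SimpleGraph V) (q : ℕ) :
    (V ⊕ (G.edgeSet × Fin q)) → (V ⊕ (G.edgeSet × Fin q)) → Prop
  | Sum.inl u, Sum.inr p => u ∈ (p.1 : Sym2 V)
  | Sum.inr p, Sum.inl u => u ∈ (p.1 : Sym2 V)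
  | _, _ => False

/-- The q-subdivision graph `S_q(G)`: every edge `uv` of `G` is replaced by `q`
disjoint paths of length 2. -/
def qSubdivision (G : SimpleGraph V) (q : ℕ) :
    SimpleGraph (V ⊕ (G.edgeSet × Fin q)) where
  Adj := qSubAdj G q
  symm := by
    constructor
    intro a b h
    cases a <;> cases b <;> simp_all [qSubAdj]
  loopless := by
    constructor
    intro a h
    cases a <;> simp_all [qSubAdj]

noncomputable instance (G : SimpleGraph V) (q : ℕ) :
    DecidableRel (qSubdivision G q).Adj := Classical.decRel _

noncomputable instance [Fintype V] (G : SimpleGraph V) : Fintype G.edgeSet :=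
  Fintype.ofFinite _

section Aux
open Matrix LinearMap

variable [Fintype V] (G : SimpleGraph V) [DecidableRel G.Adj] (q : ℕ)

lemma qsub_not_adj_inl_inl (u v : V) : ¬ (qSubdivision G q).Adj (Sum.inl u) (Sum.inl v) :=
  fun h => h

lemma qsub_not_adj_inr_inr (p p' : G.edgeSet × Fin q) :
    ¬ (qSubdivision G q).Adj (Sum.inr p) (Sum.inr p') := fun h => h

lemma qsub_adj_inl_inr (u : V) (p : G.edgeSet × Fin q) :
    (qSubdivision G q).Adj (Sum.inl u) (Sum.inr p) ↔ u ∈ (p.1 : Sym2 V) := Iff.rfl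

lemma qsub_adj_inr_inl (u : V) (p : G.edgeSet × Fin q) :
    (qSubdivision G q).Adj (Sum.inr p) (Sum.inl u) ↔ u ∈ (p.1 : Sym2 V) := Iff.rfl

/-- The top-right block of the normalized adjacency matrix of the subdivision. -/
noncomputable def subB : Matrix V (G.edgeSet × Fin q) ℝ :=
  Matrix.of fun u p => normAdj (qSubdivision G q) (Sum.inl u) (Sum.inr p)

lemma normAdj_symm_entry {W : Type*} [Fintype W] (H : SimpleGraph W) [DecidableRel H.Adj]
    (i j : W) : normAdj H i j = normAdj H j i := by
  have h := normAdj_isHermitian H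
  conv_lhs => rw [← h]
  simp [Matrix.conjTranspose_apply]

lemma normAdj_qSubdivision_eq :
    normAdj (qSubdivision G q) = Matrix.fromBlocks 0 (subB G q) (subB G q)ᵀ 0 := by
  ext i j
  cases i with
  | inl u =>
    cases j with
    | inl v =>
      rw [Matrix.fromBlocks_apply₁₁]
      simp only [normAdj, Matrix.of_apply, Matrix.zero_apply,
        if_neg (qsub_not_adj_inl_inl G q u v)]
    | inr p => rfl
  | inr p =>
    cases j with
    | inl v =>
      rw [Matrix.fromBlocks_apply₂₁, Matrix.transpose_apply]
      exact normAdj_symm_entry _ _ _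
    | inr p' =>
      rw [Matrix.fromBlocks_apply₂₂]
      simp only [normAdj, Matrix.of_apply, Matrix.zero_apply,
        if_neg (qsub_not_adj_inr_inr G q p p')]
end Aux
section Aux
open Matrix LinearMap
set_option linter.unusedSectionVars false

variable [Fintype V] (G : SimpleGraph V) [DecidableRel G.Adj] (q : ℕ)

lemma qsub_degree_pos_inr (p : G.edgeSet × Fin q) :
    0 < (qSubdivision G q).degree (Sum.inr p) := by
  rw [SimpleGraph.degree_pos_iff_exists_adj]
  rcases p with ⟨⟨e, he⟩, k⟩
  revert he
  induction e using Sym2.ind with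
  | _ a b =>
    intro he
    exact ⟨Sum.inl a, Sym2.mem_iff.mpr (Or.inl rfl)⟩

lemma qsub_degree_pos_inl (hq : 0 < q) (u : V) {v : V} (huv : G.Adj u v) :
    0 < (qSubdivision G q).degree (Sum.inl u) := by
  rw [SimpleGraph.degree_pos_iff_exists_adj]
  exact ⟨Sum.inr (⟨s(u, v), G.mem_edgeSet.mpr huv⟩, ⟨0, hq⟩), Sym2.mem_iff.mpr (Or.inl rfl)⟩
end Aux
section Core
open Matrix LinearMap
set_option linter.unusedSectionVars false

lemma walk_constant {G : SimpleGraph V} (h : G.Preconnected) {w : V → ℝ}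
    (hw : ∀ a b, G.Adj a b → w a = w b) (u v : V) : w u = w v := by
  obtain ⟨p⟩ := h u v
  induction p with
  | nil => rfl
  | cons ha _ ih => exact (hw _ _ ha).trans ih

variable [Fintype V] [DecidableEq V] (G : SimpleGraph V) [DecidableRel G.Adj] (q : ℕ)

lemma subB_entry (u : V) (p : G.edgeSet × Fin q) (hu : u ∈ (p.1 : Sym2 V)) :
    subB G q u p = 1 / Real.sqrt (((qSubdivision G q).degree (Sum.inl u) : ℝ) *
      ((qSubdivision G q).degree (Sum.inr p) : ℝ)) := by
  simp only [subB, normAdj, Matrix.of_apply]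
  rw [if_pos]
  exact hu

lemma subB_zero (u : V) (p : G.edgeSet × Fin q) (hu : u ∉ (p.1 : Sym2 V)) :
    subB G q u p = 0 := by
  simp only [subB, normAdj, Matrix.of_apply]
  rw [if_neg]
  exact hu

lemma subBT_mulVec_apply (x : V → ℝ) (a b : V) (hab : G.Adj a b) (k : Fin q) :
    ((subB G q)ᵀ *ᵥ x) (⟨s(a,b), G.mem_edgeSet.mpr hab⟩, k) =
      subB G q a (⟨s(a,b), G.mem_edgeSet.mpr hab⟩, k) * x a
      + subB G q b (⟨s(a,b), G.mem_edgeSet.mpr hab⟩, k) * x b := by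
  have h1 : ((subB G q)ᵀ *ᵥ x) (⟨s(a,b), G.mem_edgeSet.mpr hab⟩, k) =
      ∑ u, subB G q u (⟨s(a,b), G.mem_edgeSet.mpr hab⟩, k) * x u := by
    simp [Matrix.mulVec, dotProduct]
  rw [h1, ← Finset.sum_subset (Finset.subset_univ {a, b})]
  · rw [Finset.sum_pair hab.ne]
  · intro u _ hu
    have hu' : u ∉ (s(a,b) : Sym2 V) := by
      simp only [Finset.mem_insert, Finset.mem_singleton] at hu
      rw [Sym2.mem_iff]
      exact hu
    rw [subB_zero G q u _ hu', zero_mul]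
end Core

section Main
open Matrix LinearMap
set_option linter.unusedSectionVars false
set_option maxHeartbeats 1000000

variable [Fintype V] [DecidableEq V] (G : SimpleGraph V) [DecidableRel G.Adj] (q : ℕ)

lemma finrank_ker_subBT (hconn : G.Connected) (hb : G.Colorable 2) (hq : 0 < q) :
    Module.finrank ℝ (LinearMap.ker ((subB G q)ᵀ).mulVecLin) = 1 := by
  classical
  rcases subsingleton_or_nontrivial V with hV | hV
  · haveI : IsEmpty G.edgeSet := by
      constructor; rintro ⟨e, he⟩
      revert he
      induction e using Sym2.ind with
      | _ a b => exact fun he => (G.ne_of_adj he) (Subsingleton.elim a b)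
    haveI : IsEmpty (G.edgeSet × Fin q) := ⟨fun p => IsEmpty.false p.1⟩
    have hker : LinearMap.ker ((subB G q)ᵀ).mulVecLin = ⊤ := by
      rw [LinearMap.ker_eq_top]
      apply LinearMap.ext; intro x
      funext p
      exact (IsEmpty.false p).elim
    rw [hker, finrank_top, Module.finrank_fintype_fun_eq_card]
    have hne : Nonempty V := hconn.nonempty
    have h1 : Fintype.card V ≤ 1 := Fintype.card_le_one_iff_subsingleton.mpr hV
    have h2 : 0 < Fintype.card V := Fintype.card_pos
    omega
  · obtain ⟨col⟩ := hb
    set d : V → ℝ := fun u => ((qSubdivision G q).degree (Sum.inl u) : ℝ) with hd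
    have hadj_ex : ∀ u : V, ∃ v, G.Adj u v := by
      intro u
      obtain ⟨v, hne⟩ := exists_ne u
      obtain ⟨w⟩ := hconn u v
      cases w with
      | nil => exact absurd rfl hne
      | cons h _ => exact ⟨_, h⟩
    have hdpos : ∀ u : V, 0 < d u := by
      intro u
      obtain ⟨v, huv⟩ := hadj_ex u
      have h := qsub_degree_pos_inl G q hq u huv
      simp only [hd]
      exact_mod_cast h
    have hrdpos : ∀ u : V, 0 < Real.sqrt (d u) := fun u => Real.sqrt_pos.mpr (hdpos u)
    have hdE : ∀ p : G.edgeSet × Fin q, 0 < ((qSubdivision G q).degree (Sum.inr p) : ℝ) := by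
      intro p; exact_mod_cast qsub_degree_pos_inr G q p
    have hrdE : ∀ p, 0 < Real.sqrt ((qSubdivision G q).degree (Sum.inr p) : ℝ) :=
      fun p => Real.sqrt_pos.mpr (hdE p)
    set σ : V → ℝ := fun u => if col u = 0 then 1 else -1 with hσdef
    have hσsq : ∀ u, σ u * σ u = 1 := by
      intro u; by_cases h : col u = 0 <;> simp [hσdef, h]
    have hσne : ∀ u, σ u ≠ 0 := by
      intro u; by_cases h : col u = 0 <;> simp [hσdef, h]
    have hσadj : ∀ a b, G.Adj a b → σ a = -σ b := by
      intro a b hab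
      have h := col.valid hab
      have h2 : ∀ i : Fin 2, i = 0 ∨ i = 1 := by decide
      simp only [hσdef]
      rcases h2 (col a) with h1 | h1 <;> rcases h2 (col b) with h3 | h3 <;>
        rw [h1, h3] at h ⊢ <;> simp_all <;> norm_num
    set s : V → ℝ := fun u => σ u * Real.sqrt (d u) with hsdef
    -- s is in the kernel
    have hsker : (subB G q)ᵀ.mulVecLin s = 0 := by
      rw [Matrix.mulVecLin_apply]
      funext p
      rcases p with ⟨⟨e, he⟩, k⟩
      revert he
      induction e using Sym2.ind with
      | _ a b =>
        intro he
        have hab : G.Adj a b := G.mem_edgeSet.mp he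
        have h0 := subBT_mulVec_apply G q s a b hab k
        rw [Pi.zero_apply]
        rw [show (⟨s(a,b), he⟩ : G.edgeSet) = ⟨s(a,b), G.mem_edgeSet.mpr hab⟩ from rfl, h0,
          subB_entry G q a _ (Sym2.mem_iff.mpr (Or.inl rfl)),
          subB_entry G q b _ (Sym2.mem_iff.mpr (Or.inr rfl))]
        set p : G.edgeSet × Fin q := (⟨s(a,b), G.mem_edgeSet.mpr hab⟩, k)
        rw [Real.sqrt_mul (le_of_lt (hdpos a)), Real.sqrt_mul (le_of_lt (hdpos b))]
        have hA := (hrdpos a).ne'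
        have hB := (hrdpos b).ne'
        have hE := (hrdE p).ne'
        simp only [hsdef]
        rw [hσadj a b hab]
        field_simp [hA, hB, hE]
        ring
    -- any kernel element is a multiple of s
    have hker_le : ∀ x : V → ℝ, (subB G q)ᵀ.mulVecLin x = 0 → ∃ t : ℝ, x = t • s := by
      intro x hx
      rw [Matrix.mulVecLin_apply] at hx
      have hz : ∀ a b, G.Adj a b →
          σ a * (x a / Real.sqrt (d a)) = σ b * (x b / Real.sqrt (d b)) := by
        intro a b hab
        have h0 := congrFun hx (⟨s(a,b), G.mem_edgeSet.mpr hab⟩, ⟨0, hq⟩)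
        rw [subBT_mulVec_apply G q x a b hab ⟨0, hq⟩, Pi.zero_apply,
          subB_entry G q a _ (Sym2.mem_iff.mpr (Or.inl rfl)),
          subB_entry G q b _ (Sym2.mem_iff.mpr (Or.inr rfl))] at h0
        set p : G.edgeSet × Fin q := (⟨s(a,b), G.mem_edgeSet.mpr hab⟩, ⟨0, hq⟩)
        rw [Real.sqrt_mul (le_of_lt (hdpos a)), Real.sqrt_mul (le_of_lt (hdpos b))] at h0
        have hA := (hrdpos a).ne'
        have hB := (hrdpos b).ne'
        have hE := (hrdE p).ne'
        rw [hσadj a b hab]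
        field_simp [hA, hB, hE] at h0
        have h1 : x a * Real.sqrt (d b) + x b * Real.sqrt (d a) = 0 := by
          apply mul_right_cancel₀ hE
          linear_combination (Real.sqrt ((qSubdivision G q).degree (Sum.inr p) : ℝ)) * h0
        field_simp [hA, hB]
        linear_combination (-(σ b)) * h1
      obtain ⟨u₀⟩ := hconn.nonempty
      refine ⟨σ u₀ * (x u₀ / Real.sqrt (d u₀)), ?_⟩
      funext u
      have ht : σ u₀ * (x u₀ / Real.sqrt (d u₀)) = σ u * (x u / Real.sqrt (d u)) :=
        walk_constant hconn.preconnected hz u₀ u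
      rw [Pi.smul_apply, smul_eq_mul, ht, hsdef]
      have hA := (hrdpos u).ne'
      field_simp [hA]
      linear_combination (-(x u)) * hσsq u
    have hsne : s ≠ 0 := by
      intro h
      obtain ⟨u₀⟩ := hconn.nonempty
      have := congrFun h u₀
      rw [hsdef, Pi.zero_apply] at this
      exact (mul_ne_zero (hσne u₀) (hrdpos u₀).ne') this
    have hker : LinearMap.ker ((subB G q)ᵀ).mulVecLin = Submodule.span ℝ {s} := by
      apply le_antisymm
      · intro x hx
        obtain ⟨t, ht⟩ := hker_le x (LinearMap.mem_ker.mp hx)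
        exact Submodule.mem_span_singleton.mpr ⟨t, ht.symm⟩
      · rw [Submodule.span_le, Set.singleton_subset_iff]
        exact LinearMap.mem_ker.mpr hsker
    rw [hker]
    exact finrank_span_singleton hsne
end Main

section Block
open Matrix LinearMap
lemma fromBlocks_mulVec_eq_zero_iff {α β : Type*} [Fintype α] [Fintype β]
    (B : Matrix α β ℝ) (C : Matrix β α ℝ) (v : α ⊕ β → ℝ) :
    (Matrix.fromBlocks 0 B C 0) *ᵥ v = 0 ↔
      B *ᵥ (v ∘ Sum.inr) = 0 ∧ C *ᵥ (v ∘ Sum.inl) = 0 := by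
  rw [Matrix.fromBlocks_mulVec]
  simp only [Matrix.zero_mulVec, zero_add, add_zero]
  constructor
  · intro h
    constructor
    · funext a; exact congrFun h (Sum.inl a)
    · funext b; exact congrFun h (Sum.inr b)
  · rintro ⟨h1, h2⟩
    funext w
    cases w with
    | inl a => exact congrFun h1 a
    | inr b => exact congrFun h2 b

noncomputable def kerBlockEquiv {α β : Type*} [Fintype α] [Fintype β]
    (B : Matrix α β ℝ) (C : Matrix β α ℝ) :
    (LinearMap.ker C.mulVecLin × LinearMap.ker B.mulVecLin) ≃ₗ[ℝ]
      LinearMap.ker (Matrix.fromBlocks 0 B C 0).mulVecLin where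
  toFun xy := ⟨Sum.elim xy.1.val xy.2.val, by
    rw [LinearMap.mem_ker, Matrix.mulVecLin_apply, fromBlocks_mulVec_eq_zero_iff]
    exact ⟨xy.2.prop, xy.1.prop⟩⟩
  invFun z := (⟨z.val ∘ Sum.inl, by
      have := (fromBlocks_mulVec_eq_zero_iff B C z.val).mp z.prop
      exact this.2⟩,
    ⟨z.val ∘ Sum.inr, by
      have := (fromBlocks_mulVec_eq_zero_iff B C z.val).mp z.prop
      exact this.1⟩)
  map_add' x y := by
    apply Subtype.ext
    funext w
    cases w <;> rfl
  map_smul' c x := by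
    apply Subtype.ext
    funext w
    cases w <;> rfl
  left_inv x := rfl
  right_inv z := by
    apply Subtype.ext
    funext w
    cases w <;> rfl

lemma finrank_ker_fromBlocks {α β : Type*} [Fintype α] [Fintype β]
    (B : Matrix α β ℝ) (C : Matrix β α ℝ) :
    Module.finrank ℝ (LinearMap.ker (Matrix.fromBlocks 0 B C 0).mulVecLin) =
      Module.finrank ℝ (LinearMap.ker C.mulVecLin) +
        Module.finrank ℝ (LinearMap.ker B.mulVecLin) := by
  rw [← (kerBlockEquiv B C).finrank_eq, Module.finrank_prod]
end Block

section Final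
open Matrix LinearMap
set_option linter.unusedSectionVars false

theorem stmt9' [Fintype V] [DecidableEq V] (G : SimpleGraph V) [DecidableRel G.Adj]
    (hconn : G.Connected) (hb : G.Colorable 2) (q : ℕ) (hq : 0 < q) :
    eigMult (normAdj (qSubdivision G q)) 0 + Fintype.card V = G.edgeFinset.card * q + 2 := by
  classical
  have hM : normAdj (qSubdivision G q) = Matrix.fromBlocks 0 (subB G q) (subB G q)ᵀ 0 :=
    normAdj_qSubdivision_eq G q
  have htl : Matrix.toLin' (normAdj (qSubdivision G q)) =
      (normAdj (qSubdivision G q)).mulVecLin :=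
    LinearMap.ext fun v => by rw [Matrix.toLin'_apply, Matrix.mulVecLin_apply]
  have h0 : eigMult (normAdj (qSubdivision G q)) 0 =
      Module.finrank ℝ (LinearMap.ker (normAdj (qSubdivision G q)).mulVecLin) := by
    unfold eigMult
    rw [zero_smul, sub_zero, htl]
  rw [h0, hM, finrank_ker_fromBlocks]
  have hk1 : Module.finrank ℝ (LinearMap.ker ((subB G q)ᵀ).mulVecLin) = 1 :=
    finrank_ker_subBT G q hconn hb hq
  have h1 := LinearMap.finrank_range_add_finrank_ker (subB G q).mulVecLin
  have h2 := LinearMap.finrank_range_add_finrank_ker ((subB G q)ᵀ).mulVecLin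
  have h3 : Module.finrank ℝ (LinearMap.range ((subB G q)ᵀ).mulVecLin) =
      Module.finrank ℝ (LinearMap.range (subB G q).mulVecLin) :=
    Matrix.rank_transpose (subB G q)
  rw [Module.finrank_fintype_fun_eq_card] at h1 h2
  have hcard : Fintype.card (G.edgeSet × Fin q) = G.edgeFinset.card * q := by
    rw [Fintype.card_prod, Fintype.card_fin, SimpleGraph.edgeFinset, Set.toFinset_card]
  rw [hcard] at h1
  omega
end Final

/-- for bipartite `G`, the multiplicity of the eigenvalue 0 of the
normalized adjacency matrix of `S_q(G)` is `mq - n + 2`. -/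
theorem stmt9 [Fintype V] [DecidableEq V] (G : SimpleGraph V) [DecidableRel G.Adj]
    (hconn : G.Connected) (hb : G.Colorable 2) (q : ℕ) (hq : 0 < q) :
    eigMult (normAdj (qSubdivision G q)) 0 + Fintype.card V = G.edgeFinset.card * q + 2 := by
  exact stmt9' G hconn hb q hq
end

section
/- Let G be a simple connected graph with m edges and S_q(G) its q-subdivision graph. If i is a new node of S_q(G) with neighbors s, t (old nodes) and j is any old node, then the hitting times on S_q(G) satisfy T̂_{ij} = 1 + 2(T_{sj} + T_{tj}) and T̂_{ji} = 2mq - 1 + 2(T_{js} + T_{jt}) - (T_{ts} + T_{st}), where T denotes hitting times on G. -/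
open Finset

variable {V : Type*}

section StmtAux

variable [Fintype V]

lemma aux_deg_pos (G : SimpleGraph V) [DecidableRel G.Adj] (hconn : G.Connected)
    {s t : V} (hst : G.Adj s t) (u : V) : 0 < G.degree u := by
  rw [SimpleGraph.degree_pos_iff_exists_adj]
  by_cases h : u = s
  · exact ⟨t, h ▸ hst⟩
  · obtain ⟨w⟩ := hconn.preconnected u s
    cases w with
    | nil => exact absurd rfl h
    | cons h' _ => exact ⟨_, h'⟩

lemma aux_harmonic_le {W : Type*} [Fintype W] (H : SimpleGraph W) [DecidableRel H.Adj]
    (hconn : H.Connected) (f : W → ℝ) (z : W) (hz : f z = 0)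
    (hf : ∀ i, i ≠ z → f i = (∑ k ∈ H.neighborFinset i, f k) / (H.degree i : ℝ)) :
    ∀ i, f i ≤ 0 := by
  obtain ⟨i₀, -, hmax⟩ := Finset.exists_max_image Finset.univ f ⟨z, Finset.mem_univ z⟩
  have hmax' : ∀ a, f a ≤ f i₀ := fun a => hmax a (Finset.mem_univ a)
  have step : ∀ i, f i = f i₀ → i ≠ z → ∀ k ∈ H.neighborFinset i, f k = f i₀ := by
    intro i hi hiz k hk
    have hdpos : 0 < H.degree i := by
      rw [SimpleGraph.degree_pos_iff_exists_adj]
      exact ⟨k, (SimpleGraph.mem_neighborFinset H i k).1 hk⟩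
    have hdR : (0:ℝ) < (H.degree i : ℝ) := by exact_mod_cast hdpos
    have h1 : ∑ k ∈ H.neighborFinset i, f k = (H.degree i : ℝ) * f i₀ := by
      have h2 := hf i hiz
      rw [hi] at h2
      field_simp at h2
      linarith
    have hsum : ∑ k ∈ H.neighborFinset i, (f i₀ - f k) = 0 := by
      rw [Finset.sum_sub_distrib, h1, Finset.sum_const,
        SimpleGraph.card_neighborFinset_eq_degree, nsmul_eq_mul]
      ring
    have := (Finset.sum_eq_zero_iff_of_nonneg
      (fun k _ => sub_nonneg.2 (hmax' k))).1 hsum k hk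
    linarith
  have key : ∀ (i j : W) (_ : H.Walk i j), f i = f i₀ → (f j = f i₀ ∨ f z = f i₀) := by
    intro i j p
    induction p with
    | nil => exact fun h => Or.inl h
    | @cons a b c hab p ih =>
        intro hfa
        by_cases haz : a = z
        · exact Or.inr (haz ▸ hfa)
        · exact ih (step a hfa haz b ((SimpleGraph.mem_neighborFinset H a b).2 hab))
  obtain ⟨w⟩ := hconn.preconnected i₀ z
  have hz0 : f z = f i₀ := (key i₀ z w rfl).elim id id
  intro i
  calc f i ≤ f i₀ := hmax' i
  _ = f z := hz0.symm
  _ = 0 := hz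

lemma aux_hitting_le {W : Type*} [Fintype W] (H : SimpleGraph W) [DecidableRel H.Adj]
    (hconn : H.Connected) {T1 T2 : W → W → ℝ}
    (h1 : IsHitting H T1) (h2 : IsHitting H T2) (i z : W) : T1 i z ≤ T2 i z := by
  have hh := aux_harmonic_le H hconn (fun i => T1 i z - T2 i z) z
    (by simp [h1.1 z, h2.1 z]) ?_ i
  · linarith
  · intro i hiz
    have e1 := h1.2 i z hiz
    have e2 := h2.2 i z hiz
    rw [e1, e2, Finset.sum_sub_distrib, sub_div]
    ring

lemma aux_hitting_unique {W : Type*} [Fintype W] (H : SimpleGraph W) [DecidableRel H.Adj]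
    (hconn : H.Connected) {T1 T2 : W → W → ℝ}
    (h1 : IsHitting H T1) (h2 : IsHitting H T2) : T1 = T2 :=
  funext fun i => funext fun z =>
    le_antisymm (aux_hitting_le H hconn h1 h2 i z) (aux_hitting_le H hconn h2 h1 i z)

end StmtAux

section SubAux

lemma adj_inl_inr {G : SimpleGraph V} {q : ℕ} {u : V} {p : G.edgeSet × Fin q} :
    (qSubdivision G q).Adj (Sum.inl u) (Sum.inr p) ↔ u ∈ (p.1 : Sym2 V) := Iff.rfl

lemma adj_inr_inl {G : SimpleGraph V} {q : ℕ} {u : V} {p : G.edgeSet × Fin q} :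
    (qSubdivision G q).Adj (Sum.inr p) (Sum.inl u) ↔ u ∈ (p.1 : Sym2 V) := Iff.rfl

lemma adj_inl_inl {G : SimpleGraph V} {q : ℕ} {u v : V} :
    ¬ (qSubdivision G q).Adj (Sum.inl u) (Sum.inl v) := fun h => h

lemma adj_inr_inr {G : SimpleGraph V} {q : ℕ} {p p' : G.edgeSet × Fin q} :
    ¬ (qSubdivision G q).Adj (Sum.inr p) (Sum.inr p') := fun h => h

lemma qSubdivision_connected (G : SimpleGraph V) (hconn : G.Connected) (q : ℕ) (hq : 0 < q) :
    (qSubdivision G q).Connected := by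
  have hto : ∀ x : V ⊕ (G.edgeSet × Fin q),
      ∃ u : V, (qSubdivision G q).Reachable x (Sum.inl u) := by
    rintro (u | p)
    · exact ⟨u, SimpleGraph.Reachable.refl _⟩
    · refine ⟨(p.1 : Sym2 V).out.1, SimpleGraph.Adj.reachable ?_⟩
      exact adj_inr_inl.2 (Sym2.out_fst_mem _)
  have hold : ∀ u v : V, (qSubdivision G q).Reachable (Sum.inl u) (Sum.inl v) := by
    intro u v
    obtain ⟨w⟩ := hconn.preconnected u v
    induction w with
    | nil => exact SimpleGraph.Reachable.refl _
    | @cons a b c hab p ih =>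
        refine SimpleGraph.Reachable.trans ?_ ih
        have h1 : (qSubdivision G q).Adj (Sum.inl a)
            (Sum.inr (⟨s(a,b), G.mem_edgeSet.mpr hab⟩, ⟨0, hq⟩)) :=
          adj_inl_inr.2 (Sym2.mem_mk_left a b)
        have h2 : (qSubdivision G q).Adj
            (Sum.inr (⟨s(a,b), G.mem_edgeSet.mpr hab⟩, ⟨0, hq⟩)) (Sum.inl b) :=
          adj_inr_inl.2 (Sym2.mem_mk_right a b)
        exact h1.reachable.trans h2.reachable
  haveI : Nonempty (V ⊕ (G.edgeSet × Fin q)) := ⟨Sum.inl hconn.nonempty.some⟩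
  refine ⟨fun x y => ?_⟩
  obtain ⟨u, hx⟩ := hto x
  obtain ⟨v, hy⟩ := hto y
  exact hx.trans ((hold u v).trans hy.symm)

variable [Fintype V] [DecidableEq V]

lemma nbhd_inr (G : SimpleGraph V) [DecidableRel G.Adj] (q : ℕ) {x y : V}
    (he : s(x,y) ∈ G.edgeSet) (a : Fin q) :
    (qSubdivision G q).neighborFinset (Sum.inr (⟨s(x,y), he⟩, a))
      = {Sum.inl x, Sum.inl y} := by
  ext w
  cases w with
  | inl u =>
      simp [SimpleGraph.mem_neighborFinset, adj_inr_inl, Sym2.mem_iff]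
  | inr p =>
      simp [SimpleGraph.mem_neighborFinset, adj_inr_inr]

lemma deg_inr (G : SimpleGraph V) [DecidableRel G.Adj] (q : ℕ) {x y : V}
    (he : s(x,y) ∈ G.edgeSet) (a : Fin q) :
    ((qSubdivision G q).degree (Sum.inr (⟨s(x,y), he⟩, a)) : ℝ) = 2 := by
  have hxy : x ≠ y := (G.mem_edgeSet.1 he).ne
  rw [← SimpleGraph.card_neighborFinset_eq_degree, nbhd_inr G q he a]
  rw [Finset.card_insert_of_notMem (by simp [hxy]), Finset.card_singleton]
  norm_num

lemma nbhd_inl (G : SimpleGraph V) [DecidableRel G.Adj] (q : ℕ) (u : V) :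
    (qSubdivision G q).neighborFinset (Sum.inl u)
      = (Finset.univ.filter
          (fun p : G.edgeSet × Fin q => u ∈ (p.1 : Sym2 V))).image Sum.inr := by
  ext w
  cases w with
  | inl v => simp [SimpleGraph.mem_neighborFinset, adj_inl_inl]
  | inr p => simp [SimpleGraph.mem_neighborFinset, adj_inl_inr]

lemma sum_incident (G : SimpleGraph V) [DecidableRel G.Adj] (u : V) (h : Sym2 V → ℝ) :
    ∑ e ∈ Finset.univ.filter (fun e : G.edgeSet => u ∈ (e : Sym2 V)), h (e : Sym2 V)
      = ∑ v ∈ G.neighborFinset u, h s(u,v) := by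
  refine Finset.sum_bij'
    (i := fun (e : G.edgeSet)
      (he : e ∈ Finset.univ.filter fun e : G.edgeSet => u ∈ (e : Sym2 V)) =>
      Sym2.Mem.other' (Finset.mem_filter.1 he).2)
    (j := fun (v : V) (hv : v ∈ G.neighborFinset u) =>
      (⟨s(u,v), G.mem_edgeSet.mpr ((SimpleGraph.mem_neighborFinset G u v).1 hv)⟩ : G.edgeSet))
    (fun e he => ?_) (fun v hv => ?_) (fun e he => ?_) (fun v hv => ?_) (fun e he => ?_)
  · rw [SimpleGraph.mem_neighborFinset]
    have hspec := Sym2.other_spec' (Finset.mem_filter.1 he).2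
    have : s(u, Sym2.Mem.other' (Finset.mem_filter.1 he).2) ∈ G.edgeSet := by
      rw [hspec]; exact e.2
    exact G.mem_edgeSet.1 this
  · exact Finset.mem_filter.2 ⟨Finset.mem_univ _, Sym2.mem_mk_left _ _⟩
  · exact Subtype.ext (Sym2.other_spec' (Finset.mem_filter.1 he).2)
  · exact Sym2.congr_right.1 (Sym2.other_spec' _)
  · exact congrArg h (Sym2.other_spec' (Finset.mem_filter.1 he).2).symm

lemma sum_nbhd_inl (G : SimpleGraph V) [DecidableRel G.Adj] (q : ℕ) (u : V)
    (F : (V ⊕ (G.edgeSet × Fin q)) → ℝ) (g : Sym2 V → Fin q → ℝ)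
    (hF : ∀ p : G.edgeSet × Fin q, F (Sum.inr p) = g (p.1 : Sym2 V) p.2) :
    ∑ w ∈ (qSubdivision G q).neighborFinset (Sum.inl u), F w
      = ∑ v ∈ G.neighborFinset u, ∑ a : Fin q, g s(u,v) a := by
  rw [nbhd_inl, Finset.sum_image (fun _ _ _ _ h => Sum.inr_injective h)]
  have h1 : Finset.univ.filter (fun p : G.edgeSet × Fin q => u ∈ (p.1 : Sym2 V))
      = (Finset.univ.filter fun e : G.edgeSet => u ∈ (e : Sym2 V)) ×ˢ Finset.univ := by
    ext p; simp [Finset.mem_product]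
  rw [h1, Finset.sum_product]
  simp only [hF]
  exact sum_incident G u (fun e => ∑ a : Fin q, g e a)

lemma deg_inl (G : SimpleGraph V) [DecidableRel G.Adj] (q : ℕ) (u : V) :
    (((qSubdivision G q).degree (Sum.inl u) : ℕ) : ℝ) = q * G.degree u := by
  have h := sum_nbhd_inl G q u (fun _ => (1:ℝ)) (fun _ _ => 1) (fun _ => rfl)
  simp only [Finset.sum_const, nsmul_eq_mul, mul_one, Finset.card_univ, Fintype.card_fin,
    SimpleGraph.card_neighborFinset_eq_degree] at h
  rw [h]; ring

lemma sum_sum_nbhd (G : SimpleGraph V) [DecidableRel G.Adj] (g : V → ℝ) :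
    ∑ i, ∑ k ∈ G.neighborFinset i, g k = ∑ k, (G.degree k : ℝ) * g k := by
  simp only [SimpleGraph.neighborFinset_eq_filter, Finset.sum_filter]
  rw [Finset.sum_comm]
  refine Finset.sum_congr rfl fun k _ => ?_
  rw [Finset.sum_congr rfl fun i _ => if_congr (G.adj_comm i k) rfl rfl]
  rw [← Finset.sum_filter, ← SimpleGraph.neighborFinset_eq_filter, Finset.sum_const,
    SimpleGraph.card_neighborFinset_eq_degree, nsmul_eq_mul]

lemma sum_return (G : SimpleGraph V) [DecidableRel G.Adj] (hconn : G.Connected)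
    {s t : V} (hst : G.Adj s t) (T : V → V → ℝ) (hT : IsHitting G T) (j : V) :
    ∑ k ∈ G.neighborFinset j, T k j = 2 * (G.edgeFinset.card : ℝ) - G.degree j := by
  have hdeg : ∀ u, 0 < G.degree u := aux_deg_pos G hconn hst
  have key : ∀ i, (G.degree i : ℝ) * T i j
      = (if i = j then 0 else ((G.degree i : ℝ) + ∑ k ∈ G.neighborFinset i, T k j)) := by
    intro i
    by_cases hij : i = j
    · simp [hij, hT.1 j]
    · rw [if_neg hij, hT.2 i j hij]
      have hd : ((G.degree i : ℝ)) ≠ 0 := by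
        have := hdeg i; positivity
      field_simp
  have h1 : ∑ i, (G.degree i : ℝ) * T i j
      = (∑ i, ((G.degree i : ℝ) + ∑ k ∈ G.neighborFinset i, T k j))
        - ((G.degree j : ℝ) + ∑ k ∈ G.neighborFinset j, T k j) := by
    calc ∑ i, (G.degree i : ℝ) * T i j
        = ∑ i, (((G.degree i : ℝ) + ∑ k ∈ G.neighborFinset i, T k j)
            - (if i = j then ((G.degree i : ℝ) + ∑ k ∈ G.neighborFinset i, T k j) else 0)) := by
          refine Finset.sum_congr rfl fun i _ => ?_
          rw [key i]
          by_cases hij : i = j <;> simp [hij]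
      _ = _ := by
          rw [Finset.sum_sub_distrib, Finset.sum_ite_eq' Finset.univ j, if_pos (Finset.mem_univ j)]
  have h2 : ∑ i, ∑ k ∈ G.neighborFinset i, T k j = ∑ k, (G.degree k : ℝ) * T k j :=
    sum_sum_nbhd G (fun k => T k j)
  have h3 : ∑ i, (G.degree i : ℝ) = 2 * (G.edgeFinset.card : ℝ) := by
    have h0 := G.sum_degrees_eq_twice_card_edges
    have hcard : #(@SimpleGraph.edgeFinset V G G.fintypeEdgeSet) = #G.edgeFinset := by
      congr 1
      ext e
      simp [SimpleGraph.mem_edgeFinset]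
    rw [hcard] at h0
    exact_mod_cast h0
  rw [Finset.sum_add_distrib, h2, h3] at h1
  linarith

end SubAux

section HatT

variable [Fintype V] [DecidableEq V]

noncomputable def bOld (T : V → V → ℝ) (j : V) : Sym2 V → ℝ :=
  Sym2.lift ⟨fun x y => T x j + T y j, fun _ _ => add_comm _ _⟩

noncomputable def cOld (T : V → V → ℝ) (M : ℝ) (e : Sym2 V) (w : V) : ℝ :=
  M - 1 + 2 * Sym2.lift ⟨fun x y => T w x + T w y, fun _ _ => add_comm _ _⟩ e
    - Sym2.lift ⟨fun x y => T x y + T y x, fun _ _ => add_comm _ _⟩ e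

noncomputable def liftc (c : V → ℝ) : Sym2 V → ℝ :=
  Sym2.lift ⟨fun b c' => c b + c c', fun _ _ => add_comm _ _⟩

@[simp] lemma bOld_mk (T : V → V → ℝ) (j x y : V) :
    bOld T j s(x,y) = T x j + T y j := rfl

@[simp] lemma cOld_mk (T : V → V → ℝ) (M : ℝ) (x y w : V) :
    cOld T M s(x,y) w = M - 1 + 2 * (T w x + T w y) - (T x y + T y x) := rfl

@[simp] lemma liftc_mk (c : V → ℝ) (x y : V) : liftc c s(x,y) = c x + c y := rfl

noncomputable def hatT (G : SimpleGraph V) (T : V → V → ℝ) (q : ℕ) (M : ℝ) :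
    (V ⊕ (G.edgeSet × Fin q)) → (V ⊕ (G.edgeSet × Fin q)) → ℝ
  | Sum.inl u, Sum.inl j => 4 * T u j
  | Sum.inr p, Sum.inl j => 1 + 2 * bOld T j (p.1 : Sym2 V)
  | Sum.inl w, Sum.inr p => cOld T M (p.1 : Sym2 V) w
  | Sum.inr p, Sum.inr p' =>
      if p = p' then 0 else 1 + liftc (cOld T M (p'.1 : Sym2 V)) (p.1 : Sym2 V) / 2

end HatT

section Main

variable [Fintype V] [DecidableEq V]

lemma hatT_isHitting (G : SimpleGraph V) [DecidableRel G.Adj] (hconn : G.Connected)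
    {s₀ t₀ : V} (hst : G.Adj s₀ t₀) (q : ℕ) (hq : 0 < q)
    (T : V → V → ℝ) (hT : IsHitting G T) :
    IsHitting (qSubdivision G q) (hatT G T q (2 * (G.edgeFinset.card : ℝ) * q)) := by
  set M : ℝ := 2 * (G.edgeFinset.card : ℝ) * q with hM
  have hdeg : ∀ u, 0 < G.degree u := aux_deg_pos G hconn hst
  have hdegR : ∀ u : V, (0:ℝ) < (G.degree u : ℝ) := fun u => by exact_mod_cast hdeg u
  have hqR : (0:ℝ) < (q:ℝ) := by exact_mod_cast hq
  have hTsum : ∀ i j : V, i ≠ j →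
      ∑ k ∈ G.neighborFinset i, T k j = (G.degree i : ℝ) * (T i j - 1) := by
    intro i j hij
    have h := hT.2 i j hij
    have hd := (hdegR i).ne'
    have h2 : (∑ k ∈ G.neighborFinset i, T k j) / (G.degree i : ℝ) = T i j - 1 := by linarith
    rw [← h2]
    field_simp
  have hTret : ∀ j, ∑ k ∈ G.neighborFinset j, T k j
      = 2 * (G.edgeFinset.card : ℝ) - G.degree j := sum_return G hconn hst T hT
  constructor
  · rintro (j | p)
    · show 4 * T j j = 0
      rw [hT.1 j]; ring
    · show (if p = p then (0:ℝ) else _) = 0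
      rw [if_pos rfl]
  · rintro (u | p) (j | p') hne
    -- CASE 1 : old → old
    · have huj : u ≠ j := fun h => hne (by rw [h])
      have hsum : ∑ w ∈ (qSubdivision G q).neighborFinset (Sum.inl u),
          hatT G T q M w (Sum.inl j)
          = (q:ℝ) * (G.degree u : ℝ) * (4 * T u j - 1) := by
        rw [sum_nbhd_inl G q u _ (fun e _ => 1 + 2 * bOld T j e) (fun p => rfl)]
        have h1 : ∀ v ∈ G.neighborFinset u,
            ∑ _a : Fin q, (1 + 2 * bOld T j s(u,v))
              = ((q:ℝ) * (1 + 2 * T u j) + 2 * (q:ℝ) * T v j) := by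
          intro v _
          rw [Finset.sum_const, Finset.card_univ, Fintype.card_fin, nsmul_eq_mul, bOld_mk]
          ring
        rw [Finset.sum_congr rfl h1, Finset.sum_add_distrib, Finset.sum_const,
          SimpleGraph.card_neighborFinset_eq_degree, nsmul_eq_mul, ← Finset.mul_sum,
          hTsum u j huj]
        ring
      rw [show hatT G T q M (Sum.inl u) (Sum.inl j) = 4 * T u j from rfl, hsum, deg_inl G q u]
      have h2 : (q:ℝ) * (G.degree u : ℝ) ≠ 0 := ne_of_gt (mul_pos hqR (hdegR u))
      have hd' : (G.degree u : ℝ) ≠ 0 := (hdegR u).ne'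
      field_simp
      ring
    -- CASE 2 : old → new
    · clear hne
      obtain ⟨⟨e', he'⟩, a'⟩ := p'
      revert he'
      induction e' using Sym2.inductionOn with
      | _ x y =>
        intro he'
        have hxy : G.Adj x y := G.mem_edgeSet.1 he'
        have hxyne : x ≠ y := hxy.ne
        have hF : ∀ p : G.edgeSet × Fin q,
            hatT G T q M (Sum.inr p) (Sum.inr (⟨s(x,y), he'⟩, a'))
              = (fun e a => if e = s(x,y) ∧ a = a' then (0:ℝ)
                  else 1 + liftc (cOld T M s(x,y)) e / 2) (p.1 : Sym2 V) p.2 := by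
          rintro ⟨⟨e, he⟩, a⟩
          show (if (⟨⟨e, he⟩, a⟩ : G.edgeSet × Fin q) = (⟨⟨s(x,y), he'⟩, a'⟩) then (0:ℝ)
            else 1 + liftc (cOld T M s(x,y)) e / 2) = _
          refine if_congr ?_ rfl rfl
          simp [Prod.ext_iff, Subtype.ext_iff]
        rw [show hatT G T q M (Sum.inl u) (Sum.inr (⟨s(x,y), he'⟩, a'))
              = cOld T M s(x,y) u from rfl,
          sum_nbhd_inl G q u _ (fun e a => if e = s(x,y) ∧ a = a' then (0:ℝ)
            else 1 + liftc (cOld T M s(x,y)) e / 2) hF, deg_inl G q u]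
        simp only [liftc_mk]
        have hsplit : ∀ (v : V) (a : Fin q),
            (if s(u,v) = s(x,y) ∧ a = a' then (0:ℝ)
              else 1 + (cOld T M s(x,y) u + cOld T M s(x,y) v) / 2)
            = (1 + (cOld T M s(x,y) u + cOld T M s(x,y) v) / 2)
              - (if s(u,v) = s(x,y) ∧ a = a'
                  then (1 + (cOld T M s(x,y) u + cOld T M s(x,y) v) / 2) else 0) := by
          intro v a
          by_cases h : s(u,v) = s(x,y) ∧ a = a'
          · rw [if_pos h, if_pos h]; ring
          · rw [if_neg h, if_neg h]; ring
        have hinner2 : ∀ (v : V) (t : ℝ),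
            ∑ a : Fin q, (if s(u,v) = s(x,y) ∧ a = a' then t else 0)
              = (if s(u,v) = s(x,y) then t else 0) := by
          intro v t
          by_cases h : s(u,v) = s(x,y)
          · rw [if_pos h]
            have hcong : ∀ a : Fin q,
                (if s(u,v) = s(x,y) ∧ a = a' then t else 0) = (if a = a' then t else 0) :=
              fun a => if_congr (by simp [h]) rfl rfl
            rw [Finset.sum_congr rfl fun a _ => hcong a,
              Finset.sum_ite_eq' Finset.univ a' (fun _ => t), if_pos (Finset.mem_univ a')]
          · rw [if_neg h]
            exact Finset.sum_eq_zero fun a _ => if_neg (fun hc => h hc.1)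
        have hstep : ∑ v ∈ G.neighborFinset u, ∑ a : Fin q,
            (if s(u,v) = s(x,y) ∧ a = a' then (0:ℝ)
              else 1 + (cOld T M s(x,y) u + cOld T M s(x,y) v) / 2)
          = (∑ v ∈ G.neighborFinset u,
              (q:ℝ) * (1 + (cOld T M s(x,y) u + cOld T M s(x,y) v) / 2))
            - ∑ v ∈ G.neighborFinset u,
              (if s(u,v) = s(x,y)
                then (1 + (cOld T M s(x,y) u + cOld T M s(x,y) v) / 2) else 0) := by
          rw [← Finset.sum_sub_distrib]
          refine Finset.sum_congr rfl fun v _ => ?_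
          rw [Finset.sum_congr rfl fun a _ => hsplit v a, Finset.sum_sub_distrib,
            Finset.sum_const, Finset.card_univ, Fintype.card_fin, nsmul_eq_mul,
            hinner2 v _]
        have hmain : ∑ v ∈ G.neighborFinset u,
            (q:ℝ) * (1 + (cOld T M s(x,y) u + cOld T M s(x,y) v) / 2)
            = ((q:ℝ) + (q:ℝ) * cOld T M s(x,y) u / 2) * (G.degree u : ℝ)
              + (q:ℝ)/2 * ∑ v ∈ G.neighborFinset u, cOld T M s(x,y) v := by
          have hpt : ∀ v : V, (q:ℝ) * (1 + (cOld T M s(x,y) u + cOld T M s(x,y) v) / 2)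
              = ((q:ℝ) + (q:ℝ) * cOld T M s(x,y) u / 2) + (q:ℝ)/2 * cOld T M s(x,y) v :=
            fun v => by ring
          rw [Finset.sum_congr rfl fun v _ => hpt v, Finset.sum_add_distrib,
            Finset.sum_const, SimpleGraph.card_neighborFinset_eq_degree, nsmul_eq_mul,
            ← Finset.mul_sum]
          ring
        have hsumc : ∑ v ∈ G.neighborFinset u, cOld T M s(x,y) v
            = (G.degree u : ℝ) * (M - 1 - (T x y + T y x))
              + 2 * (∑ v ∈ G.neighborFinset u, T v x)
              + 2 * (∑ v ∈ G.neighborFinset u, T v y) := by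
          simp only [cOld_mk]
          have hpt : ∀ v : V, M - 1 + 2 * (T v x + T v y) - (T x y + T y x)
              = (M - 1 - (T x y + T y x)) + (2 * T v x + 2 * T v y) := fun v => by ring
          rw [Finset.sum_congr rfl fun v _ => hpt v, Finset.sum_add_distrib,
            Finset.sum_const, SimpleGraph.card_neighborFinset_eq_degree, nsmul_eq_mul,
            Finset.sum_add_distrib, ← Finset.mul_sum, ← Finset.mul_sum]
          ring
        rw [hstep, hmain, hsumc]
        by_cases hux : u = x
        · subst hux
          have hcorr : ∑ v ∈ G.neighborFinset u,
              (if s(u,v) = s(u,y)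
                then (1 + (cOld T M s(u,y) u + cOld T M s(u,y) v) / 2) else 0)
              = 1 + (cOld T M s(u,y) u + cOld T M s(u,y) y) / 2 := by
            rw [Finset.sum_congr rfl fun v _ => if_congr Sym2.congr_right rfl rfl,
              Finset.sum_ite_eq' (G.neighborFinset u) y
                (fun v => 1 + (cOld T M s(u,y) u + cOld T M s(u,y) v) / 2),
              if_pos ((SimpleGraph.mem_neighborFinset G u y).2 hxy)]
          rw [hcorr, hTret u, hTsum u y hxyne]
          simp only [cOld_mk]
          rw [hT.1 u, hT.1 y, hM]
          have h2 : (q:ℝ) * (G.degree u : ℝ) ≠ 0 := ne_of_gt (mul_pos hqR (hdegR u))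
          have hd' : (G.degree u : ℝ) ≠ 0 := (hdegR u).ne'
          field_simp
          ring
        · by_cases huy : u = y
          · subst huy
            have hcorr : ∑ v ∈ G.neighborFinset u,
                (if s(u,v) = s(x,u)
                  then (1 + (cOld T M s(x,u) u + cOld T M s(x,u) v) / 2) else 0)
                = 1 + (cOld T M s(x,u) u + cOld T M s(x,u) x) / 2 := by
              have hiff : ∀ v : V, (s(u,v) = s(x,u)) ↔ (v = x) := by
                intro v
                rw [Sym2.eq_swap (a := x) (b := u)]
                exact Sym2.congr_right
              rw [Finset.sum_congr rfl fun v _ => if_congr (hiff v) rfl rfl,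
                Finset.sum_ite_eq' (G.neighborFinset u) x
                  (fun v => 1 + (cOld T M s(x,u) u + cOld T M s(x,u) v) / 2),
                if_pos ((SimpleGraph.mem_neighborFinset G u x).2 hxy.symm)]
            rw [hcorr, hTret u, hTsum u x (Ne.symm hxyne)]
            simp only [cOld_mk]
            rw [hT.1 u, hT.1 x, hM]
            have h2 : (q:ℝ) * (G.degree u : ℝ) ≠ 0 := ne_of_gt (mul_pos hqR (hdegR u))
            have hd' : (G.degree u : ℝ) ≠ 0 := (hdegR u).ne'
            field_simp
            ring
          · have hcorr : ∑ v ∈ G.neighborFinset u,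
                (if s(u,v) = s(x,y)
                  then (1 + (cOld T M s(x,y) u + cOld T M s(x,y) v) / 2) else 0)
                = 0 := by
              refine Finset.sum_eq_zero fun v _ => ?_
              rw [if_neg]
              intro h
              have hu : u ∈ s(x,y) := h ▸ Sym2.mem_mk_left u v
              rcases Sym2.mem_iff.1 hu with h1 | h1
              · exact hux h1
              · exact huy h1
            rw [hcorr, hTsum u x hux, hTsum u y huy]
            simp only [cOld_mk]
            have h2 : (q:ℝ) * (G.degree u : ℝ) ≠ 0 := ne_of_gt (mul_pos hqR (hdegR u))
            have hd' : (G.degree u : ℝ) ≠ 0 := (hdegR u).ne'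
            field_simp
            ring
    -- CASE 3 : new → old
    · clear hne
      obtain ⟨⟨e, he⟩, a⟩ := p
      revert he
      induction e using Sym2.inductionOn with
      | _ x y =>
        intro he
        have hxy : x ≠ y := (G.mem_edgeSet.1 he).ne
        rw [show hatT G T q M (Sum.inr (⟨s(x,y), he⟩, a)) (Sum.inl j)
              = 1 + 2 * bOld T j s(x,y) from rfl, deg_inr G q he a,
          nbhd_inr G q he a, Finset.sum_pair (by simp [hxy]),
          show hatT G T q M (Sum.inl x) (Sum.inl j) = 4 * T x j from rfl,
          show hatT G T q M (Sum.inl y) (Sum.inl j) = 4 * T y j from rfl, bOld_mk]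
        ring
    -- CASE 4 : new → new
    · have hpp' : p ≠ p' := fun h => hne (by rw [h])
      clear hne
      obtain ⟨⟨e, he⟩, a⟩ := p
      revert hpp'
      revert he
      induction e using Sym2.inductionOn with
      | _ x y =>
        intro he hpp'
        have hxy : x ≠ y := (G.mem_edgeSet.1 he).ne
        rw [show hatT G T q M (Sum.inr (⟨s(x,y), he⟩, a)) (Sum.inr p')
              = (if (⟨⟨s(x,y), he⟩, a⟩ : G.edgeSet × Fin q) = p' then (0:ℝ)
                 else 1 + liftc (cOld T M (p'.1 : Sym2 V)) s(x,y) / 2) from rfl,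
          if_neg hpp', deg_inr G q he a, nbhd_inr G q he a,
          Finset.sum_pair (by simp [hxy]),
          show hatT G T q M (Sum.inl x) (Sum.inr p')
            = cOld T M (p'.1 : Sym2 V) x from rfl,
          show hatT G T q M (Sum.inl y) (Sum.inr p')
            = cOld T M (p'.1 : Sym2 V) y from rfl,
          liftc_mk]

end Main

/-- hitting times between a new node (with neighbors `s, t`) and an old
node `j` of `S_q(G)`. -/
theorem stmt11 [Fintype V] [DecidableEq V] (G : SimpleGraph V) [DecidableRel G.Adj]
    (hconn : G.Connected) (q : ℕ) (hq : 0 < q)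
    (T : V → V → ℝ) (T' : (V ⊕ (G.edgeSet × Fin q)) → (V ⊕ (G.edgeSet × Fin q)) → ℝ)
    (hT : IsHitting G T) (hT' : IsHitting (qSubdivision G q) T')
    (s t : V) (hst : G.Adj s t) (a : Fin q) (j : V) :
    T' (Sum.inr (⟨s(s, t), G.mem_edgeSet.mpr hst⟩, a)) (Sum.inl j) =
      1 + 2 * (T s j + T t j) ∧
    T' (Sum.inl j) (Sum.inr (⟨s(s, t), G.mem_edgeSet.mpr hst⟩, a)) =
      2 * (G.edgeFinset.card : ℝ) * q - 1 + 2 * (T j s + T j t) - (T t s + T s t) := by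
  have hT2 : IsHitting (qSubdivision G q) (hatT G T q (2 * (G.edgeFinset.card : ℝ) * q)) :=
    hatT_isHitting G hconn hst q hq T hT
  have hEq : T' = hatT G T q (2 * (G.edgeFinset.card : ℝ) * q) :=
    aux_hitting_unique (qSubdivision G q) (qSubdivision_connected G hconn q hq) hT' hT2
  rw [hEq]
  constructor
  · rw [show hatT G T q (2 * (G.edgeFinset.card : ℝ) * q)
        (Sum.inr (⟨s(s,t), G.mem_edgeSet.mpr hst⟩, a)) (Sum.inl j)
        = 1 + 2 * bOld T j s(s,t) from rfl, bOld_mk]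
  · rw [show hatT G T q (2 * (G.edgeFinset.card : ℝ) * q) (Sum.inl j)
        (Sum.inr (⟨s(s,t), G.mem_edgeSet.mpr hst⟩, a))
        = cOld T (2 * (G.edgeFinset.card : ℝ) * q) s(s,t) j from rfl, cOld_mk]
    ring
end

section
/- Let G be a simple connected graph and S_q(G) its q-subdivision graph. Then: (1) for old nodes i, j, r̂_{ij} = (2/q) r_{ij}; (2) for a new node i with neighbors s, t and an old node j, r̂_{ij} = 1/2 + (2r_{sj} + 2r_{tj} - r_{st})/(2q); (3) for new nodes i (neighbors s, t) and j (neighbors u, v), r̂_{ij} = 1 + (r_{su} + r_{tu} + r_{sv} + r_{tv} - r_{st} - r_{uv})/(2q), where r and r̂ denote effective resistances in G and S_q(G). -/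
open Finset

variable {V : Type*}

section StmtAux
open Matrix

lemma lap_nbr_apply {W : Type*} [Fintype W] [DecidableEq W] (H : SimpleGraph W) [DecidableRel H.Adj]
    (f : W → ℝ) (i : W) :
    (H.lapMatrix ℝ *ᵥ f) i = ∑ v ∈ H.neighborFinset i, (f i - f v) := by
  rw [SimpleGraph.lapMatrix_mulVec_apply, Finset.sum_sub_distrib, Finset.sum_const,
    SimpleGraph.card_neighborFinset_eq_degree, nsmul_eq_mul]

lemma lap_full_apply {W : Type*} [Fintype W] [DecidableEq W] (H : SimpleGraph W) [DecidableRel H.Adj]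
    (f : W → ℝ) (i : W) :
    (H.lapMatrix ℝ *ᵥ f) i = ∑ j, if H.Adj i j then f i - f j else 0 := by
  rw [lap_nbr_apply, SimpleGraph.neighborFinset_eq_filter, Finset.sum_filter]

lemma recip {W : Type*} [Fintype W] [DecidableEq W] (H : SimpleGraph W) [DecidableRel H.Adj]
    (φ χ : W → ℝ) (i j k l : W)
    (hφ : H.lapMatrix ℝ *ᵥ φ =
      (fun x => (if x = i then (1 : ℝ) else 0) - (if x = j then (1 : ℝ) else 0)))
    (hχ : H.lapMatrix ℝ *ᵥ χ =
      (fun x => (if x = k then (1 : ℝ) else 0) - (if x = l then (1 : ℝ) else 0))) :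
    φ k - φ l = χ i - χ j := by
  have hs : (H.lapMatrix ℝ)ᵀ = H.lapMatrix ℝ := H.isSymm_lapMatrix (R := ℝ)
  have key : (H.lapMatrix ℝ *ᵥ χ) ⬝ᵥ φ = χ ⬝ᵥ (H.lapMatrix ℝ *ᵥ φ) := by
    rw [Matrix.dotProduct_mulVec, ← Matrix.mulVec_transpose, hs]
  rw [hφ, hχ] at key
  simpa [dotProduct, sub_mul, mul_sub, ite_mul, mul_ite,
    Finset.sum_sub_distrib] using key

lemma sum_edge [Fintype V] [DecidableEq V] (G : SimpleGraph V) [DecidableRel G.Adj]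
    (u : V) (g : Sym2 V → ℝ) :
    (∑ e : G.edgeSet, if u ∈ (e : Sym2 V) then g e else 0)
      = ∑ v ∈ G.neighborFinset u, g s(u, v) := by
  rw [← Finset.sum_filter]
  refine Finset.sum_bij' (fun e he => Sym2.Mem.other' (Finset.mem_filter.mp he).2)
    (fun v hv => (⟨s(u, v), G.mem_edgeSet.mpr (by simpa using hv)⟩ :
      G.edgeSet))
    ?_ ?_ ?_ ?_ ?_
  · intro e he
    rw [SimpleGraph.mem_neighborFinset, ← SimpleGraph.mem_edgeSet, Sym2.other_spec']
    exact e.2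
  · intro v hv
    simp [Sym2.mem_iff]
  · intro e he
    exact Subtype.ext (Sym2.other_spec' _)
  · intro v hv
    exact Sym2.congr_right.mp (Sym2.other_spec' _)
  · intro e he
    rw [Sym2.other_spec']

/-- `sumPsi ψ e` is `ψ x + ψ y` for `e = s(x,y)`. -/
noncomputable def sumPsi (ψ : V → ℝ) : Sym2 V → ℝ :=
  Sym2.lift ⟨fun x y => ψ x + ψ y, fun x y => add_comm _ _⟩

@[simp] lemma sumPsi_mk (ψ : V → ℝ) (x y : V) : sumPsi ψ s(x, y) = ψ x + ψ y := rfl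

/-- The test potential on the subdivision graph built from a potential `ψ` on `G`
and extra charges `κ` on the new vertices. -/
noncomputable def Phi (G : SimpleGraph V) (q : ℕ) (ψ : V → ℝ)
    (κ : G.edgeSet × Fin q → ℝ) : (V ⊕ (G.edgeSet × Fin q)) → ℝ
  | Sum.inl w => 2 / q * ψ w
  | Sum.inr p => sumPsi ψ (p.1 : Sym2 V) / q + κ p

lemma qSub_adj_inl_inl (G : SimpleGraph V) (q : ℕ) (u v : V) :
    ¬ (qSubdivision G q).Adj (Sum.inl u) (Sum.inl v) := fun h => h

lemma qSub_adj_inl_inr (G : SimpleGraph V) (q : ℕ) (u : V) (p : G.edgeSet × Fin q) :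
    (qSubdivision G q).Adj (Sum.inl u) (Sum.inr p) ↔ u ∈ (p.1 : Sym2 V) := Iff.rfl

lemma qSub_adj_inr_inl (G : SimpleGraph V) (q : ℕ) (u : V) (p : G.edgeSet × Fin q) :
    (qSubdivision G q).Adj (Sum.inr p) (Sum.inl u) ↔ u ∈ (p.1 : Sym2 V) := Iff.rfl

lemma qSub_adj_inr_inr (G : SimpleGraph V) (q : ℕ) (p p' : G.edgeSet × Fin q) :
    ¬ (qSubdivision G q).Adj (Sum.inr p) (Sum.inr p') := fun h => h

lemma lapPhi_inl [Fintype V] [DecidableEq V] (G : SimpleGraph V) [DecidableRel G.Adj]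
    {q : ℕ} (hq : 0 < q) (ψ : V → ℝ) (κ : G.edgeSet × Fin q → ℝ) (u : V) :
    ((qSubdivision G q).lapMatrix ℝ *ᵥ Phi G q ψ κ) (Sum.inl u)
      = (G.lapMatrix ℝ *ᵥ ψ) u
        - ∑ p : G.edgeSet × Fin q, (if u ∈ (p.1 : Sym2 V) then κ p else 0) := by
  have hq' : (q : ℝ) ≠ 0 := Nat.cast_ne_zero.mpr hq.ne'
  rw [lap_full_apply, Fintype.sum_sum_type]
  have h1 : (∑ v : V, if (qSubdivision G q).Adj (Sum.inl u) (Sum.inl v)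
      then Phi G q ψ κ (Sum.inl u) - Phi G q ψ κ (Sum.inl v) else 0) = 0 := by
    refine Finset.sum_eq_zero fun v _ => ?_
    rw [if_neg (qSub_adj_inl_inl G q u v)]
  rw [h1, zero_add]
  have h2 : ∀ p : G.edgeSet × Fin q,
      (if (qSubdivision G q).Adj (Sum.inl u) (Sum.inr p)
        then Phi G q ψ κ (Sum.inl u) - Phi G q ψ κ (Sum.inr p) else 0)
      = (if u ∈ (p.1 : Sym2 V) then 2 / q * ψ u - sumPsi ψ (p.1 : Sym2 V) / q else 0)
        - (if u ∈ (p.1 : Sym2 V) then κ p else 0) := by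
    intro p
    simp only [qSub_adj_inl_inr]
    split_ifs with h
    · simp only [Phi]; ring
    · simp
  rw [Finset.sum_congr rfl fun p _ => h2 p, Finset.sum_sub_distrib]
  congr 1
  rw [Fintype.sum_prod_type]
  have h3 : ∀ e : G.edgeSet,
      (∑ _a : Fin q, if u ∈ (e : Sym2 V) then 2 / q * ψ u - sumPsi ψ (e : Sym2 V) / q else 0)
      = (if u ∈ (e : Sym2 V) then (q : ℝ) * (2 / q * ψ u - sumPsi ψ (e : Sym2 V) / q) else 0) := by
    intro e
    rw [Finset.sum_const, Finset.card_univ, Fintype.card_fin, nsmul_eq_mul, mul_ite, mul_zero]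
  rw [Finset.sum_congr rfl fun e _ => h3 e,
    sum_edge G u (fun e => (q : ℝ) * (2 / q * ψ u - sumPsi ψ e / q)), lap_nbr_apply]
  refine Finset.sum_congr rfl fun v _ => ?_
  rw [sumPsi_mk]
  field_simp
  ring

lemma lapPhi_inr [Fintype V] [DecidableEq V] (G : SimpleGraph V) [DecidableRel G.Adj]
    {q : ℕ} (ψ : V → ℝ) (κ : G.edgeSet × Fin q → ℝ) (p : G.edgeSet × Fin q) :
    ((qSubdivision G q).lapMatrix ℝ *ᵥ Phi G q ψ κ) (Sum.inr p) = 2 * κ p := by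
  obtain ⟨⟨e, he⟩, a⟩ := p
  induction' e using Sym2.ind with x y
  have hxy : G.Adj x y := G.mem_edgeSet.mp he
  rw [lap_full_apply, Fintype.sum_sum_type]
  have h1 : (∑ p' : G.edgeSet × Fin q,
      if (qSubdivision G q).Adj (Sum.inr (⟨s(x, y), he⟩, a)) (Sum.inr p')
      then Phi G q ψ κ (Sum.inr (⟨s(x, y), he⟩, a)) - Phi G q ψ κ (Sum.inr p') else 0) = 0 := by
    refine Finset.sum_eq_zero fun p' _ => ?_
    rw [if_neg (qSub_adj_inr_inr G q _ p')]
  rw [h1, add_zero]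
  have h2 : ∀ v : V,
      (if (qSubdivision G q).Adj (Sum.inr (⟨s(x, y), he⟩, a)) (Sum.inl v)
        then Phi G q ψ κ (Sum.inr (⟨s(x, y), he⟩, a)) - Phi G q ψ κ (Sum.inl v) else 0)
      = (if v ∈ ({x, y} : Finset V)
        then ((ψ x + ψ y) / q + κ (⟨s(x, y), he⟩, a)) - 2 / q * ψ v else 0) := by
    intro v
    simp only [qSub_adj_inr_inl, Phi, sumPsi_mk, Sym2.mem_iff, Finset.mem_insert,
      Finset.mem_singleton]
  rw [Finset.sum_congr rfl fun v _ => h2 v, Finset.sum_ite_mem, Finset.univ_inter,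
    Finset.sum_pair hxy.ne]
  ring

end StmtAux

set_option maxHeartbeats 1000000 in
/-- effective resistances in `S_q(G)` in terms of those in `G`. -/
theorem stmt13 [Fintype V] [DecidableEq V] (G : SimpleGraph V) [DecidableRel G.Adj]
    (hconn : G.Connected) (q : ℕ) (hq : 0 < q)
    (r : V → V → ℝ) (r' : (V ⊕ (G.edgeSet × Fin q)) → (V ⊕ (G.edgeSet × Fin q)) → ℝ)
    (hr : IsEffRes G r) (hr' : IsEffRes (qSubdivision G q) r') :
    (∀ i j : V, r' (Sum.inl i) (Sum.inl j) = 2 / q * r i j) ∧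
    (∀ (s t : V) (hst : G.Adj s t) (a : Fin q) (j : V),
      r' (Sum.inr (⟨s(s, t), G.mem_edgeSet.mpr hst⟩, a)) (Sum.inl j) =
        1 / 2 + (2 * r s j + 2 * r t j - r s t) / (2 * q)) ∧
    (∀ (s t u v : V) (hst : G.Adj s t) (huv : G.Adj u v) (a b : Fin q),
      ((⟨s(s, t), G.mem_edgeSet.mpr hst⟩, a) : G.edgeSet × Fin q) ≠
        (⟨s(u, v), G.mem_edgeSet.mpr huv⟩, b) →
      r' (Sum.inr (⟨s(s, t), G.mem_edgeSet.mpr hst⟩, a))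
          (Sum.inr (⟨s(u, v), G.mem_edgeSet.mpr huv⟩, b)) =
        1 + (r s u + r t u + r s v + r t v - r s t - r u v) / (2 * q)) := by
  refine ⟨?_, ?_, ?_⟩
  · -- old node / old node
    intro i j
    obtain ⟨φ, hφ, hrij⟩ := hr i j
    obtain ⟨ρ, hρ, hρr⟩ := hr' (Sum.inl i) (Sum.inl j)
    have hΦ : Matrix.mulVec ((qSubdivision G q).lapMatrix ℝ) (Phi G q φ (fun _ => 0)) =
        (fun k => (if k = Sum.inl i then (1 : ℝ) else 0) -
          (if k = Sum.inl j then (1 : ℝ) else 0)) := by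
      funext w
      cases w with
      | inl w =>
        rw [lapPhi_inl G hq]
        simp only [hφ]
        simp [Sum.inl.injEq]
      | inr p =>
        rw [lapPhi_inr]
        simp
    have key := recip _ ρ (Phi G q φ (fun _ => 0)) _ _ _ _ hρ hΦ
    rw [hρr, key]
    show 2 / (q : ℝ) * φ i - 2 / (q : ℝ) * φ j = _
    rw [hrij]
    ring
  · -- new node / old node
    intro s t hst a j
    have hstne : s ≠ t := hst.ne
    obtain ⟨φ1, hφ1, hr1⟩ := hr s j
    obtain ⟨φ2, hφ2, hr2⟩ := hr t j
    obtain ⟨φ3, hφ3, hr3⟩ := hr s t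
    set m : G.edgeSet × Fin q := (⟨s(s, t), G.mem_edgeSet.mpr hst⟩, a) with hm
    obtain ⟨ρ, hρ, hρr⟩ := hr' (Sum.inr m) (Sum.inl j)
    set ψ : V → ℝ := fun x => (φ1 x + φ2 x) / 2 with hψdef
    set κ : G.edgeSet × Fin q → ℝ := fun p => if p = m then (1 : ℝ) / 2 else 0 with hκ
    have hψ : Matrix.mulVec (G.lapMatrix ℝ) ψ = fun x =>
        (((if x = s then (1 : ℝ) else 0) - (if x = j then (1 : ℝ) else 0)) +
         ((if x = t then (1 : ℝ) else 0) - (if x = j then (1 : ℝ) else 0))) / 2 := by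
      have h : ψ = (2 : ℝ)⁻¹ • (φ1 + φ2) := by
        funext x; simp [hψdef]; ring
      rw [h, Matrix.mulVec_smul, Matrix.mulVec_add, hφ1, hφ2]
      funext x; simp; ring
    have hsum : ∀ w : V, (∑ p : G.edgeSet × Fin q, if w ∈ (p.1 : Sym2 V) then κ p else 0)
        = if w ∈ (s(s, t) : Sym2 V) then (1 : ℝ) / 2 else 0 := by
      intro w
      have h : ∀ p : G.edgeSet × Fin q, (if w ∈ (p.1 : Sym2 V) then κ p else 0)
          = if p = m then (if w ∈ (s(s, t) : Sym2 V) then (1 : ℝ) / 2 else 0) else 0 := by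
        intro p
        by_cases hp : p = m
        · subst hp; simp [hκ, hm]
        · simp [hκ, hp]
      rw [Finset.sum_congr rfl fun p _ => h p, Finset.sum_ite_eq' Finset.univ m]
      simp
    have hΦ : Matrix.mulVec ((qSubdivision G q).lapMatrix ℝ) (Phi G q ψ κ) =
        (fun k => (if k = Sum.inr m then (1 : ℝ) else 0) -
          (if k = Sum.inl j then (1 : ℝ) else 0)) := by
      funext w
      cases w with
      | inl w =>
        rw [lapPhi_inl G hq]
        simp only [hψ, hsum, Sym2.mem_iff, Sum.inl.injEq, reduceCtorEq, if_false]
        by_cases h1 : w = s <;> by_cases h2 : w = t <;> by_cases h3 : w = j <;>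
          simp_all <;> norm_num
      | inr p =>
        rw [lapPhi_inr, hκ]
        by_cases hp : p = m
        · subst hp; simp
        · simp [hp]
    have key := recip _ ρ (Phi G q ψ κ) _ _ _ _ hρ hΦ
    have h31 := recip G φ3 φ1 s t s j hφ3 hφ1
    have h32 := recip G φ3 φ2 s t t j hφ3 hφ2
    have harith : ψ s + ψ t - 2 * ψ j = (2 * r s j + 2 * r t j - r s t) / 2 := by
      simp only [hψdef]
      linarith [h31, h32, hr1, hr2, hr3]
    have hPm : Phi G q ψ κ (Sum.inr m) = (ψ s + ψ t) / q + 1 / 2 := by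
      have hκm : κ m = 1 / 2 := by rw [hκ]; simp
      show sumPsi ψ (m.1 : Sym2 V) / q + κ m = _
      rw [hκm, hm]
      simp
    have hPj : Phi G q ψ κ (Sum.inl j) = 2 / q * ψ j := rfl
    rw [hρr, key, hPm, hPj]
    have h : (ψ s + ψ t) / (q : ℝ) + 1 / 2 - 2 / q * ψ j
        = 1 / 2 + (ψ s + ψ t - 2 * ψ j) / q := by ring
    rw [h, harith, div_div]
  · -- new node / new node
    intro s t u v hst huv a b hmn
    have hstne : s ≠ t := hst.ne
    have huvne : u ≠ v := huv.ne
    obtain ⟨φ1, hφ1, hr1⟩ := hr s u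
    obtain ⟨φ2, hφ2, hr2⟩ := hr t u
    obtain ⟨φ3, hφ3, hr3⟩ := hr s v
    obtain ⟨φ4, hφ4, hr4⟩ := hr t v
    obtain ⟨φ5, hφ5, hr5⟩ := hr s t
    obtain ⟨φ6, hφ6, hr6⟩ := hr u v
    set m : G.edgeSet × Fin q := (⟨s(s, t), G.mem_edgeSet.mpr hst⟩, a) with hm
    set n : G.edgeSet × Fin q := (⟨s(u, v), G.mem_edgeSet.mpr huv⟩, b) with hn
    have hmn' : m ≠ n := by rw [hm, hn]; exact hmn
    obtain ⟨ρ, hρ, hρr⟩ := hr' (Sum.inr m) (Sum.inr n)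
    set ψ : V → ℝ := fun x => (φ1 x + φ2 x + φ3 x + φ4 x) / 4 with hψdef
    set κ : G.edgeSet × Fin q → ℝ := fun p =>
      (if p = m then (1 : ℝ) / 2 else 0) + (if p = n then -(1 : ℝ) / 2 else 0) with hκ
    have hψ : Matrix.mulVec (G.lapMatrix ℝ) ψ = fun x =>
        ((((if x = s then (1 : ℝ) else 0) - (if x = u then (1 : ℝ) else 0)) +
          ((if x = t then (1 : ℝ) else 0) - (if x = u then (1 : ℝ) else 0))) +
         (((if x = s then (1 : ℝ) else 0) - (if x = v then (1 : ℝ) else 0)) +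
          ((if x = t then (1 : ℝ) else 0) - (if x = v then (1 : ℝ) else 0)))) / 4 := by
      have h : ψ = (4 : ℝ)⁻¹ • ((φ1 + φ2) + (φ3 + φ4)) := by
        funext x; simp [hψdef]; ring
      rw [h, Matrix.mulVec_smul, Matrix.mulVec_add, Matrix.mulVec_add, Matrix.mulVec_add,
        hφ1, hφ2, hφ3, hφ4]
      funext x; simp; ring
    have hsum : ∀ w : V, (∑ p : G.edgeSet × Fin q, if w ∈ (p.1 : Sym2 V) then κ p else 0)
        = (if w ∈ (s(s, t) : Sym2 V) then (1 : ℝ) / 2 else 0)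
          + (if w ∈ (s(u, v) : Sym2 V) then -(1 : ℝ) / 2 else 0) := by
      intro w
      have h : ∀ p : G.edgeSet × Fin q, (if w ∈ (p.1 : Sym2 V) then κ p else 0)
          = (if p = m then (if w ∈ (s(s, t) : Sym2 V) then (1 : ℝ) / 2 else 0) else 0)
            + (if p = n then (if w ∈ (s(u, v) : Sym2 V) then -(1 : ℝ) / 2 else 0) else 0) := by
        intro p
        rw [hκ]
        by_cases h1 : p = m <;> by_cases h2 : p = n
        · exact absurd (h1.symm.trans h2) hmn'
        · subst h1
          have h2' : ((⟨s(s, t), G.mem_edgeSet.mpr hst⟩, a) : G.edgeSet × Fin q) ≠ n := h2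
          simp [hm, h2']
        · subst h2
          have h1' : ((⟨s(u, v), G.mem_edgeSet.mpr huv⟩, b) : G.edgeSet × Fin q) ≠ m := h1
          simp [hn, h1']
        · simp [h1, h2]
      rw [Finset.sum_congr rfl fun p _ => h p, Finset.sum_add_distrib,
        Finset.sum_ite_eq' Finset.univ m, Finset.sum_ite_eq' Finset.univ n]
      simp
    have hΦ : Matrix.mulVec ((qSubdivision G q).lapMatrix ℝ) (Phi G q ψ κ) =
        (fun k => (if k = Sum.inr m then (1 : ℝ) else 0) -
          (if k = Sum.inr n then (1 : ℝ) else 0)) := by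
      funext w
      cases w with
      | inl w =>
        rw [lapPhi_inl G hq]
        simp only [hψ, hsum, Sym2.mem_iff, reduceCtorEq, if_false]
        clear hψ hsum hκ hψdef hρ hρr hφ1 hφ2 hφ3 hφ4 hφ5 hφ6 hr1 hr2 hr3 hr4 hr5 hr6
        clear hmn' hmn hm hn κ ψ ρ m n a b φ1 φ2 φ3 φ4 φ5 φ6 hr hr' hconn r r'
        by_cases h1 : w = s <;> by_cases h2 : w = t <;> by_cases h3 : w = u <;>
          by_cases h4 : w = v <;> simp_all <;> norm_num
      | inr p =>
        rw [lapPhi_inr, hκ]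
        by_cases h1 : p = m <;> by_cases h2 : p = n
        · exact absurd (h1.symm.trans h2) hmn'
        · subst h1; norm_num [h2]
        · subst h2; norm_num [h1]
        · simp [h1, h2]
    have key := recip _ ρ (Phi G q ψ κ) _ _ _ _ hρ hΦ
    have h12 := recip G φ1 φ2 s u t u hφ1 hφ2
    have h13 := recip G φ1 φ3 s u s v hφ1 hφ3
    have h14 := recip G φ1 φ4 s u t v hφ1 hφ4
    have h15 := recip G φ1 φ5 s u s t hφ1 hφ5
    have h16 := recip G φ1 φ6 s u u v hφ1 hφ6
    have h23 := recip G φ2 φ3 t u s v hφ2 hφ3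
    have h24 := recip G φ2 φ4 t u t v hφ2 hφ4
    have h25 := recip G φ2 φ5 t u s t hφ2 hφ5
    have h26 := recip G φ2 φ6 t u u v hφ2 hφ6
    have h34 := recip G φ3 φ4 s v t v hφ3 hφ4
    have h35 := recip G φ3 φ5 s v s t hφ3 hφ5
    have h36 := recip G φ3 φ6 s v u v hφ3 hφ6
    have h45 := recip G φ4 φ5 t v s t hφ4 hφ5
    have h46 := recip G φ4 φ6 t v u v hφ4 hφ6
    have h56 := recip G φ5 φ6 s t u v hφ5 hφ6
    have harith : ψ s + ψ t - ψ u - ψ v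
        = (r s u + r t u + r s v + r t v - r s t - r u v) / 2 := by
      simp only [hψdef]
      linarith [h12, h13, h14, h15, h16, h23, h24, h25, h26, h34, h35, h36, h45, h46, h56,
        hr1, hr2, hr3, hr4, hr5, hr6]
    have hPm : Phi G q ψ κ (Sum.inr m) = (ψ s + ψ t) / q + 1 / 2 := by
      have hκm : κ m = 1 / 2 := by rw [hκ]; simp [hmn']
      show sumPsi ψ (m.1 : Sym2 V) / q + κ m = _
      rw [hκm, hm]
      simp
    have hPn : Phi G q ψ κ (Sum.inr n) = (ψ u + ψ v) / q + -(1 / 2) := by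
      have hκn : κ n = -(1 / 2) := by
        rw [hκ]
        simp [hmn'.symm]
        norm_num
      show sumPsi ψ (n.1 : Sym2 V) / q + κ n = _
      rw [hκn, hn]
      simp
    rw [hρr, key, hPm, hPn]
    have h : (ψ s + ψ t) / (q : ℝ) + 1 / 2 - ((ψ u + ψ v) / q + -(1 / 2))
        = 1 + (ψ s + ψ t - ψ u - ψ v) / q := by ring
    rw [h, harith, div_div]
end
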